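/- Let Ω ⊆ ℝ^d be a compact convex polytope with positive Lebesgue measure that is not centrally symmetric. Then there exists ε > 0 such that for all t ∈ ℝ^d with |t| ≤ ε, the set Ω ∩ (Ω + t) is not centrally symmetric. -/

import Mathlib

open MeasureTheory

/-- If `Ω ⊆ ℝ^d` is a compact convex polytope (the convex hull of finitely
many points) with positive Lebesgue measure that is not centrally symmetric, then there is
`ε > 0` such that `Ω ∩ (Ω + t)` is not centrally symmetric for every `t` with `|t| ≤ ε`. -/
theorem intersection_translate_nonsymmetric (d : ℕ)
    (S : Finset (EuclideanSpace ℝ (Fin d)))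
    (Ω : Set (EuclideanSpace ℝ (Fin d)))
    (hΩ : Ω = convexHull ℝ (S : Set (EuclideanSpace ℝ (Fin d))))
    (hvol : 0 < volume Ω)
    (hnonsym : ¬ ∃ c : EuclideanSpace ℝ (Fin d),
      (fun y => c - y) '' Ω = (fun y => y - c) '' Ω) :
    ∃ ε > (0:ℝ), ∀ t : EuclideanSpace ℝ (Fin d), ‖t‖ ≤ ε →
      ¬ ∃ c : EuclideanSpace ℝ (Fin d),
        (fun y => c - y) '' (Ω ∩ ((fun x => x + t) '' Ω)) =
          (fun y => y - c) '' (Ω ∩ ((fun x => x + t) '' Ω)) := by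
  classical
  have hconv : Convex ℝ Ω := hΩ ▸ convex_convexHull ℝ _
  have hcomp : IsCompact Ω := hΩ ▸ S.finite_toSet.isCompact_convexHull ℝ
  have hclosed : IsClosed Ω := hcomp.isClosed
  -- interior is nonempty
  have hint : (interior Ω).Nonempty := by
    by_contra h
    rw [Set.not_nonempty_iff_eq_empty] at h
    have h1 : Ω ⊆ frontier Ω := by
      rw [frontier, h, Set.diff_empty]
      exact subset_closure
    have := measure_mono (μ := volume) h1
    rw [hconv.addHaar_frontier volume] at this
    exact hvol.ne' (le_antisymm this zero_le)
  obtain ⟨x₀, hx₀⟩ := hint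
  obtain ⟨r, hr, hball⟩ := Metric.isOpen_iff.1 isOpen_interior x₀ hx₀
  by_contra hcon
  push_neg at hcon
  have key : ∀ n : ℕ, ∃ t : EuclideanSpace ℝ (Fin d),
      ‖t‖ ≤ min (1/(n+1:ℝ)) (r/2) ∧ ∃ c : EuclideanSpace ℝ (Fin d),
      (fun y => c - y) '' (Ω ∩ ((fun x => x + t) '' Ω)) =
        (fun y => y - c) '' (Ω ∩ ((fun x => x + t) '' Ω)) := by
    intro n
    exact hcon (min (1/(n+1:ℝ)) (r/2)) (lt_min (by positivity) (by linarith))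
  choose t ht c hc using key
  have htlim : Filter.Tendsto t Filter.atTop (nhds 0) := by
    rw [tendsto_zero_iff_norm_tendsto_zero]
    refine squeeze_zero (fun n => norm_nonneg _) (fun n => (ht n).trans (min_le_left _ _)) ?_
    exact tendsto_one_div_add_atTop_nhds_zero_nat
  set K : ℕ → Set (EuclideanSpace ℝ (Fin d)) :=
    fun n => Ω ∩ ((fun x => x + t n) '' Ω) with hK
  have hKsub : ∀ n, K n ⊆ Ω := fun n => Set.inter_subset_left
  have hKconv : ∀ n, Convex ℝ (K n) := by
    intro n
    refine hconv.inter ?_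
    have h2 : (fun x => x + t n) '' Ω = (fun x => t n + x) '' Ω := by
      simp [add_comm]
    rw [h2]
    exact hconv.translate (t n)
  have hsym : ∀ n, ∀ x ∈ K n, (2:ℝ) • c n - x ∈ K n := by
    intro n x hx
    have h1 : c n - x ∈ (fun y => c n - y) '' K n := ⟨x, hx, rfl⟩
    rw [hc n] at h1
    obtain ⟨y, hy, hyx⟩ := h1
    have hy2 : y - c n = c n - x := hyx
    have hy3 : y = (2:ℝ) • c n - x := by linear_combination (norm := module) hy2
    rwa [← hy3]
  have hx₀K : ∀ n, x₀ ∈ K n := by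
    intro n
    refine ⟨interior_subset hx₀, x₀ - t n, ?_, by simp⟩
    apply interior_subset
    apply hball
    rw [Metric.mem_ball, dist_eq_norm]
    have h3 : x₀ - t n - x₀ = -(t n) := by abel
    calc ‖x₀ - t n - x₀‖ = ‖t n‖ := by rw [h3, norm_neg]
      _ ≤ r/2 := (ht n).trans (min_le_right _ _)
      _ < r := by linarith
  have hcΩ : ∀ n, c n ∈ Ω := by
    intro n
    have h2 : (2:ℝ) • c n - x₀ ∈ K n := hsym n x₀ (hx₀K n)
    have h4 := (hKconv n) (hx₀K n) h2 (by norm_num : (0:ℝ) ≤ 1/2)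
      (by norm_num : (0:ℝ) ≤ 1/2) (by norm_num)
    have heq : (1/2 : ℝ) • x₀ + (1/2 : ℝ) • ((2:ℝ) • c n - x₀) = c n := by
      module
    rw [heq] at h4
    exact hKsub n h4
  obtain ⟨clim, hclimΩ, φ, hφ, hφlim⟩ := hcomp.tendsto_subseq hcΩ
  have hrefl : ∀ x ∈ interior Ω, (2:ℝ) • clim - x ∈ Ω := by
    intro x hx
    obtain ⟨ρ, hρ, hballx⟩ := Metric.isOpen_iff.1 isOpen_interior x hx
    have hev : ∀ᶠ n in Filter.atTop, (2:ℝ) • c (φ n) - x ∈ Ω := by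
      have htφ : Filter.Tendsto (fun n => t (φ n)) Filter.atTop (nhds 0) :=
        htlim.comp hφ.tendsto_atTop
      filter_upwards [htφ.eventually (Metric.ball_mem_nhds 0 hρ)] with n hn
      have hxK : x ∈ K (φ n) := by
        refine ⟨interior_subset hx, x - t (φ n), ?_, by simp⟩
        apply interior_subset
        apply hballx
        rw [Metric.mem_ball, dist_eq_norm]
        have h3 : x - t (φ n) - x = -(t (φ n)) := by abel
        rw [h3, norm_neg]
        simpa [dist_eq_norm] using hn
      exact hKsub _ (hsym _ x hxK)
    have hlim2 : Filter.Tendsto (fun n => (2:ℝ) • c (φ n) - x) Filter.atTop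
        (nhds ((2:ℝ) • clim - x)) :=
      ((hφlim.const_smul (2:ℝ)).sub tendsto_const_nhds)
    exact hclosed.mem_of_tendsto hlim2 hev
  have hreflΩ : ∀ x ∈ Ω, (2:ℝ) • clim - x ∈ Ω := by
    intro x hx
    have h1 : Filter.Tendsto (fun k : ℕ => (1/(k+1):ℝ)) Filter.atTop (nhds 0) :=
      tendsto_one_div_add_atTop_nhds_zero_nat
    have h2 : Filter.Tendsto
        (fun k : ℕ => (1/(k+1):ℝ) • x₀ + (1 - 1/(k+1):ℝ) • x)
        Filter.atTop (nhds ((0:ℝ) • x₀ + (1 - 0:ℝ) • x)) :=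
      ((h1.smul_const x₀).add (((tendsto_const_nhds.sub h1)).smul_const x))
    simp only [zero_smul, sub_zero, one_smul, zero_add] at h2
    have hseq : Filter.Tendsto
        (fun k : ℕ => (2:ℝ) • clim - ((1/(k+1):ℝ) • x₀ + (1 - 1/(k+1):ℝ) • x))
        Filter.atTop (nhds ((2:ℝ) • clim - x)) := tendsto_const_nhds.sub h2
    refine hclosed.mem_of_tendsto hseq (Filter.Eventually.of_forall fun k => ?_)
    apply hrefl
    refine hconv.combo_interior_self_mem_interior hx₀ hx (by positivity) ?_ (by ring)
    have hle : (1/(k+1):ℝ) ≤ 1 := by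
      rw [div_le_one (by positivity)]
      linarith [Nat.cast_nonneg (α := ℝ) k]
    linarith
  apply hnonsym
  refine ⟨clim, ?_⟩
  ext z
  constructor
  · rintro ⟨y, hy, rfl⟩
    refine ⟨(2:ℝ) • clim - y, hreflΩ y hy, ?_⟩
    simp only
    rw [two_smul]
    abel
  · rintro ⟨y, hy, rfl⟩
    refine ⟨(2:ℝ) • clim - y, hreflΩ y hy, ?_⟩
    simp only
    rw [two_smul]
    abel
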